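/- For any m sorted (non-decreasing) sequences L_1,...,L_m of lengths n_1,...,n_m and any target rank K with 0 ≤ K ≤ n_1+...+n_m, there exist cut indices i_1,...,i_m with 0 ≤ i_t ≤ n_t, i_1+...+i_m = K, and max_t ℓ_t ≤ min_t r_t, where ℓ_t = L_t[i_t-1] if i_t > 0 and -∞ otherwise, and r_t = L_t[i_t] if i_t < n_t and +∞ otherwise. -/
import Mathlib


open scoped BigOperators Classical

/-- Left boundary value `ℓ_t` of the cut: `L_t[i_t - 1]` if `i_t > 0`, else `⊥` (−∞). -/
noncomputable def lcut {m : ℕ} (n : Fin m → ℕ) (L : ∀ t, Fin (n t) → ℝ)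
    (i : Fin m → ℕ) (t : Fin m) : EReal :=
  if h : 0 < i t ∧ i t ≤ n t then ((L t ⟨i t - 1, by omega⟩ : ℝ) : EReal) else ⊥

/-- Right boundary value `r_t` of the cut: `L_t[i_t]` if `i_t < n_t`, else `⊤` (+∞). -/
noncomputable def rcut {m : ℕ} (n : Fin m → ℕ) (L : ∀ t, Fin (n t) → ℝ)
    (i : Fin m → ℕ) (t : Fin m) : EReal :=
  if h : i t < n t then ((L t ⟨i t, h⟩ : ℝ) : EReal) else ⊤

/-- Existence of multi-way co-rank indices. -/
theorem multiway_corank_exists {m : ℕ} (n : Fin m → ℕ) (L : ∀ t, Fin (n t) → ℝ)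
    (hmono : ∀ t, Monotone (L t)) (K : ℕ) (hK : K ≤ ∑ t, n t) :
    ∃ i : Fin m → ℕ, (∀ t, i t ≤ n t) ∧ (∑ t, i t = K) ∧
      (⨆ t, lcut n L i t) ≤ ⨅ t, rcut n L i t := by
  revert hK
  induction K with
  | zero =>
    intro _
    refine ⟨fun _ => 0, fun t => Nat.zero_le _, by simp, ?_⟩
    refine iSup_le fun t => ?_
    simp [lcut]
  | succ K ih =>
    intro hK
    obtain ⟨i, hle, hsum, hcut⟩ := ih (Nat.le_of_lt (Nat.lt_of_succ_le hK))
    have hexists : ∃ t, i t < n t := by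
      by_contra h
      push_neg at h
      have : ∑ t, n t ≤ ∑ t, i t := Finset.sum_le_sum fun t _ => h t
      omega
    obtain ⟨t1, ht1⟩ := hexists
    have hne : Nonempty (Fin m) := ⟨t1⟩
    obtain ⟨t₀, ht₀⟩ := Finite.exists_min (rcut n L i)
    have ht₀lt : i t₀ < n t₀ := by
      by_contra h
      have h1 : rcut n L i t₀ = ⊤ := by simp [rcut, h]
      have h2 : rcut n L i t1 < ⊤ := by
        simp only [rcut, ht1, dif_pos]
        exact EReal.coe_lt_top _
      exact absurd (ht₀ t1) (by rw [h1]; exact not_le.mpr h2)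
    set i' := Function.update i t₀ (i t₀ + 1) with hi'
    have hrcut_le : ∀ u, rcut n L i u ≤ rcut n L i' u := by
      intro u
      rcases eq_or_ne u t₀ with rfl | h
      · simp only [rcut, hi', Function.update_self]
        by_cases h2 : i u + 1 < n u
        · rw [dif_pos h2, dif_pos ht₀lt]
          exact_mod_cast hmono u (by simp [Fin.le_def])
        · rw [dif_neg h2]; exact le_top
      · simp only [rcut, hi', Function.update_of_ne h]
        rfl
    have hlcut_eq : lcut n L i' t₀ = rcut n L i t₀ := by
      simp only [lcut, rcut, hi', Function.update_self]
      rw [dif_pos ⟨Nat.succ_pos _, ht₀lt⟩, dif_pos ht₀lt]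
      exact_mod_cast congrArg (L t₀) (Fin.ext (by simp))
    refine ⟨i', ?_, ?_, ?_⟩
    · intro t
      rcases eq_or_ne t t₀ with rfl | h
      · simp only [hi', Function.update_self]; omega
      · simp only [hi', Function.update_of_ne h]; exact hle t
    · rw [hi', Finset.sum_update_of_mem (Finset.mem_univ t₀), Finset.sdiff_singleton_eq_erase]
      have := Finset.add_sum_erase Finset.univ i (Finset.mem_univ t₀)
      omega
    · refine iSup_le fun s => le_iInf fun u => ?_
      rcases eq_or_ne s t₀ with rfl | h
      · rw [hlcut_eq]
        exact le_trans (ht₀ u) (hrcut_le u)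
      · have : lcut n L i' s = lcut n L i s := by
          simp only [lcut, hi', Function.update_of_ne h]
        rw [this]
        exact le_trans (le_trans (le_trans (le_iSup _ s) hcut) (iInf_le _ u)) (hrcut_le u)
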